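/- If l is an integer and c ∈ 𝒮_N(k) are such that the automorphism ρ^l ∘ μ_c of 𝒩 is inner, then nm divides l, c_1 = 1, and c_i = 0 for 2 ≤ i ≤ N. -/

import Mathlib

/-- `pathProd e β i a` is the path `β_{i,a} = β_{i+a-1} ⋯ β_{i+1} β_i` of length `a`
starting at the vertex `i` of the cyclic quiver with vertex set `ZMod q`
(with `pathProd e β i 0 = e i` the trivial path at `i`). -/
def pathProd {q : ℕ} {R : Type*} [Mul R] (e β : ZMod q → R) (i : ZMod q) : ℕ → R
  | 0 => e i
  | a + 1 => β (i + (a : ZMod q)) * pathProd e β i a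

/-- if `l` is an integer and `c ∈ 𝒮_N(k)` are such that the automorphism
`ρ^l ∘ μ_c` of the selfinjective Nakayama algebra `𝒩 = 𝒩_{nm,tm}` is inner, then `nm ∣ l`,
`c_1 = 1` and `c_i = 0` for `2 ≤ i ≤ N`. Here `𝒩` is presented by idempotents `e i` and
arrows `β i` with basis the paths of length `≤ tm` and concatenation product,
`N = ⌊(t+n−1)/n⌋`, `ρ` is the rotation and `μ_c` fixes all `e i` and all `β i` (`i ≠ 0`)
and sends `β 0` to `u_c β 0` with `u_c = ∑_{i=1}^N c_i β_{1,(i−1)nm}`. -/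
theorem inner_rho_mu {k : Type*} [Field k] [IsAlgClosed k] (m n t : ℕ)
    (hm : 0 < m) (hn : 0 < n) (ht : 0 < t) (hcop : Nat.Coprime n t)
    [NeZero (n * m)]
    {𝒩 : Type*} [Ring 𝒩] [Algebra k 𝒩] (e β : ZMod (n * m) → 𝒩)
    (hbasis : ∃ B : Module.Basis (ZMod (n * m) × Fin (t * m + 1)) k 𝒩,
      ∀ x, B x = pathProd e β x.1 x.2)
    (hone : ∑ i : ZMod (n * m), e i = 1)
    (hmul : ∀ (i j : ZMod (n * m)) (a b : ℕ), a ≤ t * m → b ≤ t * m →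
      pathProd e β j a * pathProd e β i b =
        if j = i + (b : ZMod (n * m)) ∧ a + b ≤ t * m then pathProd e β i (a + b) else 0)
    (c : Fin ((t + n - 1) / n) → k) (hc : c ⟨0, Nat.div_pos (by omega) hn⟩ ≠ 0)
    (μ : 𝒩 ≃ₐ[k] 𝒩)
    (hμe : ∀ i, μ (e i) = e i)
    (hμβ : ∀ i, i ≠ 0 → μ (β i) = β i)
    (hμβ0 : μ (β 0) =
      (∑ i : Fin ((t + n - 1) / n), c i • pathProd e β 1 ((i : ℕ) * (n * m))) * β 0)
    (ρ : 𝒩 ≃ₐ[k] 𝒩)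
    (hρe : ∀ i, ρ (e i) = e (i + 1)) (hρβ : ∀ i, ρ (β i) = β (i + 1))
    (l : ℤ)
    (hinner : ∃ y : 𝒩ˣ, ∀ x : 𝒩, (ρ ^ l * μ) x = ↑y⁻¹ * x * ↑y) :
    ((n * m : ℕ) : ℤ) ∣ l ∧ c ⟨0, Nat.div_pos (by omega) hn⟩ = 1 ∧
      ∀ i : Fin ((t + n - 1) / n), 1 ≤ (i : ℕ) → c i = 0 := by
  classical
  obtain ⟨B, hB⟩ := hbasis
  obtain ⟨y, hy⟩ := hinner
  have hq0 : 0 < n * m := Nat.pos_of_ne_zero (NeZero.ne _)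
  have hL1 : 1 ≤ t * m := Nat.one_le_iff_ne_zero.mpr (Nat.mul_ne_zero (by omega) (by omega))
  have hNT : Nontrivial 𝒩 := ⟨⟨B (0, ⟨0, by omega⟩), 0, B.ne_zero _⟩⟩
  -- expansion of products through coordinates
  have hrepr_mul_left : ∀ (v z : 𝒩) (p : ZMod (n*m) × Fin (t*m+1)),
      B.repr (v * z) p = ∑ x : ZMod (n*m) × Fin (t*m+1), B.repr z x * B.repr (v * B x) p := by
    intro v z p
    conv_lhs => rw [← B.sum_repr z]
    rw [Finset.mul_sum]
    simp only [mul_smul_comm, map_sum, map_smul, Finsupp.finset_sum_apply, Finsupp.smul_apply,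
      smul_eq_mul]
  have hrepr_mul_right : ∀ (v z : 𝒩) (p : ZMod (n*m) × Fin (t*m+1)),
      B.repr (z * v) p = ∑ x : ZMod (n*m) × Fin (t*m+1), B.repr z x * B.repr (B x * v) p := by
    intro v z p
    conv_lhs => rw [← B.sum_repr z]
    rw [Finset.sum_mul]
    simp only [smul_mul_assoc, map_sum, map_smul, Finsupp.finset_sum_apply, Finsupp.smul_apply,
      smul_eq_mul]
  -- coefficients of (path · z)
  have M1 : ∀ (z : 𝒩) (j : ZMod (n*m)) (a : ℕ), a ≤ t*m → ∀ (i : ZMod (n*m)) (d : Fin (t*m+1)),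
      B.repr (pathProd e β j a * z) (i, d) =
        if a ≤ (d:ℕ) ∧ j = i + (((d:ℕ) - a : ℕ) : ZMod (n*m))
        then B.repr z (i, ⟨(d:ℕ) - a, by omega⟩) else 0 := by
    intro z j a ha i d
    rw [hrepr_mul_left]
    have hterm : ∀ x : ZMod (n*m) × Fin (t*m+1),
        B.repr (pathProd e β j a * B x) (i, d)
        = if j = x.1 + (((x.2:ℕ)) : ZMod (n*m)) ∧ a + (x.2:ℕ) ≤ t*m ∧ x.1 = i ∧ a + (x.2:ℕ) = (d:ℕ)
          then 1 else 0 := by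
      intro x
      rw [hB, hmul x.1 j a x.2 ha (by omega)]
      by_cases h1 : j = x.1 + (((x.2:ℕ)) : ZMod (n*m)) ∧ a + (x.2:ℕ) ≤ t*m
      · rw [if_pos h1]
        have h2 : pathProd e β x.1 (a + (x.2:ℕ)) = B (x.1, ⟨a + (x.2:ℕ), by omega⟩) :=
          (hB (x.1, ⟨a + (x.2:ℕ), by omega⟩)).symm
        rw [h2, B.repr_self, Finsupp.single_apply]
        by_cases h3 : x.1 = i ∧ a + (x.2:ℕ) = (d:ℕ)
        · rw [if_pos, if_pos ⟨h1.1, h1.2, h3⟩]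
          exact Prod.ext h3.1 (Fin.ext h3.2)
        · rw [if_neg, if_neg]
          · rintro ⟨ha1, hb1, hc1, hd1⟩; exact h3 ⟨hc1, hd1⟩
          · intro hp
            have := Prod.ext_iff.mp hp
            exact h3 ⟨this.1, congrArg Fin.val this.2⟩
      · rw [if_neg h1, map_zero, Finsupp.coe_zero, Pi.zero_apply, if_neg]
        rintro ⟨ha1, hb1, _, hd1⟩; exact h1 ⟨ha1, by omega⟩
    by_cases hcnd : a ≤ (d:ℕ) ∧ j = i + (((d:ℕ) - a : ℕ) : ZMod (n*m))
    · rw [if_pos hcnd]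
      rw [Finset.sum_eq_single (i, (⟨(d:ℕ) - a, by omega⟩ : Fin (t*m+1)))]
      · rw [hterm]
        dsimp only
        rw [if_pos, mul_one]
        refine ⟨by simpa using hcnd.2, by omega, rfl, by omega⟩
      · intro x _ hne
        rw [hterm]
        rw [if_neg, mul_zero]
        rintro ⟨h1, h2, h3, h4⟩
        exact hne (Prod.ext h3 (Fin.ext (show (x.2:ℕ) = (d:ℕ) - a by omega)))
      · intro h; exact absurd (Finset.mem_univ _) h
    · rw [if_neg hcnd]
      apply Finset.sum_eq_zero
      intro x _
      rw [hterm, if_neg, mul_zero]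
      rintro ⟨h1, h2, h3, h4⟩
      refine hcnd ⟨by omega, ?_⟩
      rw [h1, h3]
      congr 1
      congr 1
      omega
  -- coefficients of (z · path)
  have M2 : ∀ (z : 𝒩) (j : ZMod (n*m)) (a : ℕ), a ≤ t*m → ∀ (i : ZMod (n*m)) (d : Fin (t*m+1)),
      B.repr (z * pathProd e β j a) (i, d) =
        if a ≤ (d:ℕ) ∧ j = i
        then B.repr z (j + ((a:ℕ) : ZMod (n*m)), ⟨(d:ℕ) - a, by omega⟩) else 0 := by
    intro z j a ha i d
    rw [hrepr_mul_right]
    have hterm : ∀ x : ZMod (n*m) × Fin (t*m+1),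
        B.repr (B x * pathProd e β j a) (i, d)
        = if x.1 = j + ((a:ℕ) : ZMod (n*m)) ∧ (x.2:ℕ) + a ≤ t*m ∧ j = i ∧ (x.2:ℕ) + a = (d:ℕ)
          then 1 else 0 := by
      intro x
      rw [hB, hmul j x.1 x.2 a (by omega) ha]
      by_cases h1 : x.1 = j + ((a:ℕ) : ZMod (n*m)) ∧ (x.2:ℕ) + a ≤ t*m
      · rw [if_pos h1]
        have h2 : pathProd e β j ((x.2:ℕ) + a) = B (j, ⟨(x.2:ℕ) + a, by omega⟩) :=
          (hB (j, ⟨(x.2:ℕ) + a, by omega⟩)).symm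
        rw [h2, B.repr_self, Finsupp.single_apply]
        by_cases h3 : j = i ∧ (x.2:ℕ) + a = (d:ℕ)
        · rw [if_pos, if_pos ⟨h1.1, h1.2, h3⟩]
          exact Prod.ext h3.1 (Fin.ext h3.2)
        · rw [if_neg, if_neg]
          · rintro ⟨ha1, hb1, hc1, hd1⟩; exact h3 ⟨hc1, hd1⟩
          · intro hp
            have := Prod.ext_iff.mp hp
            exact h3 ⟨this.1, congrArg Fin.val this.2⟩
      · rw [if_neg h1, map_zero, Finsupp.coe_zero, Pi.zero_apply, if_neg]
        rintro ⟨ha1, hb1, _, hd1⟩; exact h1 ⟨ha1, by omega⟩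
    by_cases hcnd : a ≤ (d:ℕ) ∧ j = i
    · rw [if_pos hcnd]
      rw [Finset.sum_eq_single (j + ((a:ℕ) : ZMod (n*m)), (⟨(d:ℕ) - a, by omega⟩ : Fin (t*m+1)))]
      · rw [hterm]
        dsimp only
        rw [if_pos, mul_one]
        exact ⟨rfl, by omega, hcnd.2, by omega⟩
      · intro x _ hne
        rw [hterm]
        rw [if_neg, mul_zero]
        rintro ⟨h1, h2, h3, h4⟩
        exact hne (Prod.ext h1 (Fin.ext (show (x.2:ℕ) = (d:ℕ) - a by omega)))
      · intro h; exact absurd (Finset.mem_univ _) h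
    · rw [if_neg hcnd]
      apply Finset.sum_eq_zero
      intro x _
      rw [hterm, if_neg, mul_zero]
      rintro ⟨h1, h2, h3, h4⟩
      exact hcnd ⟨by omega, h3⟩
  -- a unit cannot be supported on positive-length paths only
  have NIL : ¬ (∀ p : ZMod (n*m) × Fin (t*m+1), (p.2:ℕ) = 0 → B.repr (y:𝒩) p = 0) := by
    intro hz
    set I : ℕ → Submodule k 𝒩 := fun s =>
      Submodule.span k {x | ∃ p : ZMod (n*m) × Fin (t*m+1), s ≤ (p.2:ℕ) ∧ B p = x} with hI
    have hImul : ∀ s s', I s * I s' ≤ I (s + s') := by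
      intro s s'
      rw [hI]
      rw [Submodule.span_mul_span]
      rw [Submodule.span_le]
      intro x hx
      rw [Set.mem_mul] at hx
      obtain ⟨u, ⟨p, hp, rfl⟩, v, ⟨p', hp', rfl⟩, rfl⟩ := hx
      rw [hB, hB, hmul p'.1 p.1 p.2 p'.2 (by omega) (by omega)]
      split_ifs with h
      · exact Submodule.subset_span
          ⟨(p'.1, ⟨(p.2:ℕ)+(p'.2:ℕ), by omega⟩), by simp; omega,
            hB ((p'.1, ⟨(p.2:ℕ)+(p'.2:ℕ), by omega⟩))⟩
      · exact Submodule.zero_mem _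
    have hy1 : (y:𝒩) ∈ I 1 := by
      rw [← B.sum_repr (y:𝒩)]
      apply Submodule.sum_mem
      intro p _
      by_cases h0 : (p.2:ℕ) = 0
      · rw [hz p h0, zero_smul]; exact Submodule.zero_mem _
      · exact Submodule.smul_mem _ _ (Submodule.subset_span ⟨p, by omega, rfl⟩)
    have hpow : ∀ s : ℕ, I 1 ^ (s+1) ≤ I (s+1) := by
      intro s; induction s with
      | zero => rw [pow_one]
      | succ s ih =>
        rw [pow_succ]
        exact le_trans (mul_le_mul' ih (le_refl _)) (hImul _ _)
    have hz0 : (y:𝒩)^(t*m+1) = 0 := by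
      have h1 : (y:𝒩)^(t*m+1) ∈ I 1 ^ (t*m+1) := Submodule.pow_mem_pow _ hy1 _
      have h2 : I (t*m+1) = ⊥ := by
        rw [hI, Submodule.span_eq_bot]
        rintro x ⟨p, hp, rfl⟩
        exact absurd hp (by omega)
      have h3 := hpow (t*m) h1
      rw [h2, Submodule.mem_bot] at h3
      exact h3
    have hne : ((y^(t*m+1) : 𝒩ˣ) : 𝒩) ≠ 0 := Units.ne_zero _
    rw [Units.val_pow_eq_pow_val] at hne
    exact hne hz0
  -- functions on vertices invariant under almost-all rotations are constant
  have chain : ∀ f : ZMod (n*m) → k, (∀ i : ZMod (n*m), i ≠ 0 → f i = f (i + 1)) →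
      ∀ i, f i = f 0 := by
    intro f hf
    have key : ∀ d s : ℕ, s + d = n*m → 0 < s → f ((s : ℕ) : ZMod (n*m)) = f 0 := by
      intro d
      induction d with
      | zero =>
        intro s hs _
        have : s = n*m := by omega
        rw [this, ZMod.natCast_self]
      | succ d ih =>
        intro s hs hpos
        have h1 : ((s : ℕ) : ZMod (n*m)) ≠ 0 := by
          rw [Ne, ZMod.natCast_eq_zero_iff]
          intro hd
          rcases hd with ⟨u, hu⟩
          rcases u with _ | u
          · omega
          · have : n*m ≤ s := by
              calc n*m ≤ n*m*(u+1) := Nat.le_mul_of_pos_right _ (by omega)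
              _ = s := hu.symm
            omega
        rw [hf _ h1]
        have : ((s : ℕ) : ZMod (n*m)) + 1 = ((s+1 : ℕ) : ZMod (n*m)) := by push_cast; ring
        rw [this]
        exact ih (s+1) (by omega) (by omega)
    intro i
    rcases eq_or_ne i 0 with rfl | h
    · rfl
    · have h1 : ((i.val : ℕ) : ZMod (n*m)) = i := ZMod.natCast_rightInverse i
      have h2 : 0 < i.val := by
        rcases Nat.eq_zero_or_pos i.val with h0 | h0
        · exact absurd ((ZMod.val_eq_zero i).mp h0) h
        · exact h0
      rw [← h1]
      exact key (n*m - i.val) i.val (by have := ZMod.val_lt i; omega) h2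
  -- an algebra automorphism fixing all generators is the identity
  have fixid : ∀ (φ : 𝒩 ≃ₐ[k] 𝒩), (∀ i, φ (e i) = e i) → (∀ i, φ (β i) = β i) →
      ∀ x, φ x = x := by
    intro φ he hb x
    have hp : ∀ (i : ZMod (n*m)) (a : ℕ), φ (pathProd e β i a) = pathProd e β i a := by
      intro i a
      induction a with
      | zero => exact he i
      | succ a ih =>
        show φ (β _ * pathProd e β i a) = _
        rw [map_mul, hb, ih]
        rfl
    calc φ x = φ (∑ p : ZMod (n*m) × Fin (t*m+1), B.repr x p • B p) := by rw [B.sum_repr]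
    _ = ∑ p : ZMod (n*m) × Fin (t*m+1), B.repr x p • B p := by
        rw [map_sum]
        refine Finset.sum_congr rfl fun p _ => ?_
        rw [map_smul, hB, hp]
    _ = x := B.sum_repr x
  -- integer powers of the rotation
  have zp : ∀ (z : ℤ) (i : ZMod (n*m)), (ρ ^ z) (e i) = e (i + (z : ZMod (n*m))) ∧
      (ρ ^ z) (β i) = β (i + (z : ZMod (n*m))) := by
    have hsym : ∀ i, ρ.symm (e i) = e (i - 1) ∧ ρ.symm (β i) = β (i - 1) := by
      intro i
      constructor
      · rw [AlgEquiv.symm_apply_eq, hρe, sub_add_cancel]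
      · rw [AlgEquiv.symm_apply_eq, hρβ, sub_add_cancel]
    intro z
    induction z using Int.induction_on with
    | zero => intro i; simp
    | succ nn ih =>
      intro i
      have hz : ρ ^ ((nn:ℤ)+1) = ρ ^ (nn:ℤ) * ρ := zpow_add_one ρ nn
      rw [hz]
      constructor
      · rw [AlgEquiv.mul_apply, hρe, (ih (i+1)).1]
        congr 1
        push_cast
        ring
      · rw [AlgEquiv.mul_apply, hρβ, (ih (i+1)).2]
        congr 1
        push_cast
        ring
    | pred nn ih =>
      intro i
      have hz : ρ ^ (-(nn:ℤ)-1) = ρ ^ (-(nn:ℤ)) * ρ⁻¹ := zpow_sub_one ρ (-nn)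
      rw [hz]
      have hinv : ρ⁻¹ = ρ.symm := rfl
      constructor
      · rw [AlgEquiv.mul_apply, hinv, (hsym i).1, (ih (i-1)).1]
        congr 1
        push_cast
        ring
      · rw [AlgEquiv.mul_apply, hinv, (hsym i).2, (ih (i-1)).2]
        congr 1
        push_cast
        ring
  -- transfer of conjugation relations
  have hconj : ∀ x x' : 𝒩, ↑y⁻¹ * x * ↑y = x' → x * ↑y = ↑y * x' := by
    intro x x' h
    rw [← h]
    rw [show ((↑y⁻¹ * x * ↑y : 𝒩)) = ↑y⁻¹ * (x * ↑y) from mul_assoc _ _ _]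
    rw [Units.mul_inv_cancel_left]
  have hE : ∀ i : ZMod (n*m), e i = pathProd e β i 0 := fun _ => rfl
  have hp1 : ∀ i : ZMod (n*m), pathProd e β i 1 = β i * e i := by
    intro i
    show β (i + ((0:ℕ) : ZMod (n*m))) * pathProd e β i 0 = β i * e i
    rw [Nat.cast_zero, add_zero]
    rfl
  -- STEP A : nm divides l
  have hAc : ∀ i : ZMod (n*m), e i * (↑y:𝒩) = ↑y * e (i + (l : ZMod (n*m))) := by
    intro i
    apply hconj
    have h1 := hy (e i)
    rw [AlgEquiv.mul_apply, hμe, (zp l i).1] at h1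
    exact h1.symm
  have hcoordA : ∀ p : ZMod (n*m) × Fin (t*m+1), B.repr (↑y : 𝒩) p ≠ 0 →
      (((p.2:ℕ)) : ZMod (n*m)) + (l : ZMod (n*m)) = 0 := by
    intro p hp
    have h := congrArg (fun z : 𝒩 => B.repr z (p.1, p.2))
      (hAc (p.1 + (((p.2:ℕ)) : ZMod (n*m))))
    rw [hE, hE] at h
    rw [M1 (↑y) _ 0 (by omega) p.1 p.2] at h
    rw [M2 (↑y) _ 0 (by omega) p.1 p.2] at h
    rw [if_pos ⟨Nat.zero_le _, by rw [Nat.sub_zero]⟩] at h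
    by_cases hcnd : p.1 + (((p.2:ℕ)) : ZMod (n*m)) + (l : ZMod (n*m)) = p.1
    · rw [add_assoc, add_eq_left] at hcnd
      exact hcnd
    · rw [if_neg (fun hh => hcnd hh.2)] at h
      exact absurd h hp
  have hrr0 : ((l : ℤ) : ZMod (n*m)) = 0 := by
    by_contra hne
    apply NIL
    intro p hp0
    by_contra hnz
    have h := hcoordA p hnz
    rw [hp0, Nat.cast_zero, zero_add] at h
    exact hne h
  have goal1 : ((n * m : ℕ) : ℤ) ∣ l := (ZMod.intCast_zmod_eq_zero_iff_dvd l (n*m)).mp hrr0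
  -- STEP B : μ itself is inner
  have hrho1 : ∀ x, (ρ ^ l) x = x := by
    apply fixid
    · intro i; rw [(zp l i).1, hrr0, add_zero]
    · intro i; rw [(zp l i).2, hrr0, add_zero]
  have hμy : ∀ x : 𝒩, μ x = ↑y⁻¹ * x * ↑y := by
    intro x
    have h := hy x
    rw [AlgEquiv.mul_apply, hrho1] at h
    exact h
  have hEy : ∀ i, e i * (↑y:𝒩) = ↑y * e i := fun i => hconj _ _ (by rw [← hμy]; exact hμe i)
  have hBy : ∀ i, i ≠ 0 → β i * (↑y:𝒩) = ↑y * β i :=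
    fun i hi => hconj _ _ (by rw [← hμy]; exact hμβ i hi)
  have hB0y : β 0 * (↑y:𝒩) =
      ↑y * ((∑ s : Fin ((t+n-1)/n), c s • pathProd e β 1 ((s:ℕ)*(n*m))) * β 0) :=
    hconj _ _ (by rw [← hμy]; exact hμβ0)
  have hbey : ∀ i : ZMod (n*m), i ≠ 0 →
      pathProd e β i 1 * (↑y:𝒩) = ↑y * pathProd e β i 1 := by
    intro i hi
    rw [hp1]
    calc β i * e i * ↑y = β i * (e i * ↑y) := mul_assoc _ _ _
    _ = β i * (↑y * e i) := by rw [hEy]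
    _ = β i * ↑y * e i := (mul_assoc _ _ _).symm
    _ = ↑y * β i * e i := by rw [hBy i hi]
    _ = ↑y * (β i * e i) := mul_assoc _ _ _
  have hbe0 : pathProd e β 0 1 * (↑y:𝒩) =
      ↑y * ((∑ s : Fin ((t+n-1)/n), c s • pathProd e β 1 ((s:ℕ)*(n*m))) * pathProd e β 0 1) := by
    rw [hp1]
    calc β 0 * e 0 * ↑y = β 0 * (e 0 * ↑y) := mul_assoc _ _ _
    _ = β 0 * (↑y * e 0) := by rw [hEy]
    _ = β 0 * ↑y * e 0 := (mul_assoc _ _ _).symm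
    _ = ↑y * ((∑ s : Fin ((t+n-1)/n), c s • pathProd e β 1 ((s:ℕ)*(n*m))) * β 0) * e 0 := by
        rw [hB0y]
    _ = ↑y * ((∑ s : Fin ((t+n-1)/n), c s • pathProd e β 1 ((s:ℕ)*(n*m))) * (β 0 * e 0)) := by
        rw [mul_assoc, mul_assoc]
  have Npos : 0 < (t+n-1)/n := Nat.div_pos (by omega) hn
  have harith : ∀ jj : ℕ, jj < (t+n-1)/n → jj*(n*m)+1 ≤ t*m := by
    intro jj hjj
    have h1 : (jj+1)*n ≤ t+n-1 := (Nat.le_div_iff_mul_le hn).mp hjj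
    have h2 : jj*n+1 ≤ t := by
      rw [add_mul, one_mul] at h1
      omega
    have h3 : (jj*n+1)*m ≤ t*m := Nat.mul_le_mul h2 (le_refl m)
    rw [add_mul, one_mul] at h3
    calc jj*(n*m)+1 = jj*n*m+1 := by rw [mul_assoc]
    _ ≤ jj*n*m+m := by omega
    _ ≤ t*m := h3
  have hcast0 : ∀ v : ℕ, (((v*(n*m) : ℕ)) : ZMod (n*m)) = 0 := by
    intro v
    rw [Nat.cast_mul, ZMod.natCast_self, mul_zero]
  set A : ZMod (n*m) → ℕ → k := fun i v =>
    if h : v*(n*m) ≤ t*m then B.repr (↑y:𝒩) (i, ⟨v*(n*m), by omega⟩) else 0 with hA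
  have hAeq : ∀ (i : ZMod (n*m)) (v : ℕ) (hv : v*(n*m) ≤ t*m),
      A i v = B.repr (↑y:𝒩) (i, ⟨v*(n*m), by omega⟩) := by
    intro i v hv
    rw [hA]
    simp only
    rw [dif_pos hv]
  have hX1 : ∀ jj : ℕ, jj*(n*m)+1 ≤ t*m → ∀ i : ZMod (n*m), i ≠ 0 → A i jj = A (i+1) jj := by
    intro jj hj i hi
    have h := congrArg (fun z : 𝒩 => B.repr z (i, ⟨jj*(n*m)+1, by omega⟩)) (hbey i hi)
    rw [M1 (↑y) i 1 (by omega) i ⟨jj*(n*m)+1, by omega⟩] at h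
    rw [M2 (↑y) i 1 (by omega) i ⟨jj*(n*m)+1, by omega⟩] at h
    dsimp only at h
    rw [if_pos ⟨by omega, by
        rw [show jj*(n*m)+1-1 = jj*(n*m) from rfl, hcast0 jj, add_zero]⟩,
      if_pos ⟨by omega, rfl⟩] at h
    simp only [Nat.cast_one] at h
    rw [hAeq i jj (by omega), hAeq (i+1) jj (by omega)]
    exact h
  have hchain : ∀ jj : ℕ, jj*(n*m)+1 ≤ t*m → ∀ i : ZMod (n*m), A i jj = A 0 jj :=
    fun jj hj => chain (fun i => A i jj) (fun i hi => hX1 jj hj i hi)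
  have hX0 : ∀ jj : ℕ, jj*(n*m)+1 ≤ t*m →
      A 0 jj = ∑ s : Fin ((t+n-1)/n), (if (s:ℕ) ≤ jj then c s * A 1 (jj - (s:ℕ)) else 0) := by
    intro jj hj
    have hu : (∑ s : Fin ((t+n-1)/n), c s • pathProd e β 1 ((s:ℕ)*(n*m))) * pathProd e β 0 1
        = ∑ s : Fin ((t+n-1)/n), c s • pathProd e β 0 ((s:ℕ)*(n*m)+1) := by
      rw [Finset.sum_mul]
      refine Finset.sum_congr rfl fun s _ => ?_
      rw [smul_mul_assoc, hmul 0 1 ((s:ℕ)*(n*m)) 1 (by have := harith s s.isLt; omega) (by omega)]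
      rw [if_pos ⟨by rw [Nat.cast_one, zero_add], harith s s.isLt⟩]
    have h := congrArg (fun z : 𝒩 => B.repr z (0, ⟨jj*(n*m)+1, by omega⟩)) hbe0
    rw [hu, Finset.mul_sum] at h
    simp only [mul_smul_comm, map_sum, map_smul, Finsupp.finset_sum_apply, Finsupp.smul_apply,
      smul_eq_mul] at h
    rw [M1 (↑y) 0 1 (by omega) 0 ⟨jj*(n*m)+1, by omega⟩] at h
    dsimp only at h
    rw [if_pos ⟨by omega, by
        rw [show jj*(n*m)+1-1 = jj*(n*m) from rfl, hcast0 jj, add_zero]⟩] at h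
    have h2 : A 0 jj = ∑ x : Fin ((t+n-1)/n),
        c x * B.repr (↑y * pathProd e β 0 ((x:ℕ)*(n*m)+1)) (0, ⟨jj*(n*m)+1, by omega⟩) := by
      rw [hAeq 0 jj (by omega)]
      exact h
    rw [h2]
    refine Finset.sum_congr rfl fun s _ => ?_
    rw [M2 (↑y) 0 ((s:ℕ)*(n*m)+1) (harith s s.isLt) 0 ⟨jj*(n*m)+1, by omega⟩]
    dsimp only
    have hsq : ((((s:ℕ)*(n*m)+1 : ℕ)) : ZMod (n*m)) = 1 := by
      rw [Nat.cast_add, Nat.cast_one, hcast0, zero_add]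
    by_cases hs : (s:ℕ) ≤ jj
    · have e2 : (s:ℕ)*(n*m) ≤ jj*(n*m) := Nat.mul_le_mul hs (le_refl _)
      have e1 : (jj-(s:ℕ))*(n*m) = jj*(n*m) - (s:ℕ)*(n*m) := Nat.sub_mul _ _ _
      rw [if_pos ⟨by omega, rfl⟩, if_pos hs]
      congr 1
      rw [hAeq 1 (jj-(s:ℕ)) (by omega)]
      congr 1
      refine Prod.ext ?_ (Fin.ext ?_)
      · show (0:ZMod (n*m)) + _ = 1
        rw [hsq, zero_add]
      · show jj*(n*m)+1 - ((s:ℕ)*(n*m)+1) = (jj-(s:ℕ))*(n*m)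
        omega
    · rw [if_neg (fun hh => hs (Nat.le_of_mul_le_mul_right
        (show (s:ℕ)*(n*m) ≤ jj*(n*m) by have := hh.1; omega) hq0)), if_neg hs, mul_zero]
  have ha0 : A 0 0 ≠ 0 := by
    intro h0
    apply NIL
    intro p hp0
    have hzall : ∀ i : ZMod (n*m), A i 0 = 0 := by
      intro i
      rw [hchain 0 (by omega) i]
      exact h0
    have hval := hzall p.1
    rw [hAeq p.1 0 (by omega)] at hval
    rw [show p = (p.1, (⟨0*(n*m), by omega⟩ : Fin (t*m+1)))
      from Prod.ext rfl (Fin.ext (show (p.2:ℕ) = 0*(n*m) by omega))]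
    exact hval
  have hc1 : c ⟨0, Npos⟩ = 1 := by
    have h := hX0 0 (by omega)
    rw [Finset.sum_eq_single (⟨0, Npos⟩ : Fin ((t+n-1)/n))] at h
    · rw [if_pos (show ((⟨0, Npos⟩ : Fin ((t+n-1)/n)):ℕ) ≤ 0 from le_refl 0)] at h
      have h' : A 0 0 = c ⟨0, Npos⟩ * A 1 0 := h
      rw [hchain 0 (by omega) 1] at h'
      exact mul_right_cancel₀ ha0
        (show c ⟨0, Npos⟩ * A 0 0 = 1 * A 0 0 by rw [one_mul, ← h'])
    · intro s _ hs
      rw [if_neg (fun hle => hs (Fin.ext (show (s:ℕ) = 0 by omega)))]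
    · intro hmem; exact absurd (Finset.mem_univ _) hmem
  have hzero : ∀ jj : ℕ, ∀ hjN : jj < (t+n-1)/n, 1 ≤ jj → c ⟨jj, hjN⟩ = 0 := by
    intro jj
    induction jj using Nat.strong_induction_on with
    | _ jj ih =>
      intro hjN h1
      have hj : jj*(n*m)+1 ≤ t*m := harith jj hjN
      have h := hX0 jj hj
      have hterm2 : ∀ s : Fin ((t+n-1)/n),
          (if (s:ℕ) ≤ jj then c s * A 1 (jj - (s:ℕ)) else 0)
          = (if s = (⟨0, Npos⟩ : Fin ((t+n-1)/n)) then A 0 jj else 0)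
            + (if s = (⟨jj, hjN⟩ : Fin ((t+n-1)/n)) then c ⟨jj, hjN⟩ * A 0 0 else 0) := by
        intro s
        by_cases hs0 : s = (⟨0, Npos⟩ : Fin ((t+n-1)/n))
        · rw [hs0]
          rw [if_pos (show ((⟨0, Npos⟩ : Fin ((t+n-1)/n)):ℕ) ≤ jj from Nat.zero_le _)]
          rw [if_pos rfl]
          rw [if_neg (fun hh => by
            have h5 : (0:ℕ) = jj := congrArg Fin.val hh
            omega), add_zero]
          show c ⟨0, Npos⟩ * A 1 (jj - 0) = A 0 jj
          rw [hc1, one_mul, Nat.sub_zero, hchain jj hj 1]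
        · by_cases hsj : s = (⟨jj, hjN⟩ : Fin ((t+n-1)/n))
          · rw [hsj]
            rw [if_pos (show ((⟨jj, hjN⟩ : Fin ((t+n-1)/n)):ℕ) ≤ jj from le_refl jj)]
            rw [if_neg (fun hh => by
              have h5 : jj = (0:ℕ) := congrArg Fin.val hh
              omega), zero_add]
            rw [if_pos rfl]
            show c ⟨jj, hjN⟩ * A 1 (jj - jj) = c ⟨jj, hjN⟩ * A 0 0
            rw [Nat.sub_self, hchain 0 (by omega) 1]
          · rw [if_neg hs0, if_neg hsj, add_zero]
            by_cases hsle : (s:ℕ) ≤ jj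
            · rw [if_pos hsle]
              have hlt : (s:ℕ) < jj := by
                rcases Nat.lt_or_ge (s:ℕ) jj with hlt | hge
                · exact hlt
                · exact absurd (Fin.ext (show (s:ℕ) = jj by omega)) hsj
              have hge1 : 1 ≤ (s:ℕ) := by
                rcases Nat.eq_zero_or_pos (s:ℕ) with h0 | h0
                · exact absurd (Fin.ext h0) hs0
                · exact h0
              have hcz : c s = 0 := by
                have hcz' := ih (s:ℕ) hlt s.isLt hge1
                rwa [Fin.eta] at hcz'
              rw [hcz, zero_mul]
            · rw [if_neg hsle]
      rw [Finset.sum_congr rfl (fun s _ => hterm2 s)] at h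
      rw [Finset.sum_add_distrib] at h
      rw [Finset.sum_ite_eq' Finset.univ (⟨0, Npos⟩ : Fin ((t+n-1)/n)) (fun _ => A 0 jj)] at h
      rw [Finset.sum_ite_eq' Finset.univ (⟨jj, hjN⟩ : Fin ((t+n-1)/n))
        (fun _ => c ⟨jj, hjN⟩ * A 0 0)] at h
      rw [if_pos (Finset.mem_univ _), if_pos (Finset.mem_univ _)] at h
      have h2 : A 0 jj + c ⟨jj, hjN⟩ * A 0 0 = A 0 jj := h.symm
      rw [add_eq_left] at h2
      rcases mul_eq_zero.mp h2 with h3 | h3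
      · exact h3
      · exact absurd h3 ha0
  refine ⟨goal1, hc1, ?_⟩
  intro i h1
  have h := hzero (i:ℕ) i.isLt h1
  rwa [Fin.eta] at h
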